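/- For a discrete entropic optimal transport problem with kernel matrix K = exp(-C/ε), the Sinkhorn iterates satisfy ‖f^(ℓ) − f*‖_var ≤ λ(K)^(2ℓ) ‖f^(0) − f*‖_var, where λ(K) = (√η(K) − 1)/(√η(K) + 1) < 1, η(K) = max_{i,j,k,l} (K_{ik}K_{jl})/(K_{jk}K_{il}), and ‖·‖_var is the variation seminorm ‖u‖_var = max_i u_i − min_i u_i. -/

import Mathlib

open Finset Real

/-- Variation seminorm: max entry minus min entry. -/
noncomputable def varNorm {n : ℕ} [Nonempty (Fin n)] (u : Fin n → ℝ) : ℝ :=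
  Finset.univ.sup' Finset.univ_nonempty u - Finset.univ.inf' Finset.univ_nonempty u

/-- Entropic dual objective E(f,g) = ⟨f,a⟩ + ⟨g,b⟩ − ε ⟨e^{f/ε}, K e^{g/ε}⟩. -/
noncomputable def dualObj {n m : ℕ} (ε : ℝ) (a : Fin n → ℝ) (b : Fin m → ℝ)
    (K : Matrix (Fin n) (Fin m) ℝ) (f : Fin n → ℝ) (g : Fin m → ℝ) : ℝ :=
  (∑ i, f i * a i) + (∑ j, g j * b j) -
    ε * ∑ i, ∑ j, Real.exp (f i / ε) * K i j * Real.exp (g j / ε)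

/-- One full Sinkhorn iteration on `f` (update `g` from `f`, then `f` from `g`). -/
noncomputable def sinkhornStep {n m : ℕ} (ε : ℝ) (a : Fin n → ℝ) (b : Fin m → ℝ)
    (C : Matrix (Fin n) (Fin m) ℝ) (f : Fin n → ℝ) : Fin n → ℝ :=
  let g : Fin m → ℝ :=
    fun j => ε * Real.log (b j) - ε * Real.log (∑ i, Real.exp ((f i - C i j) / ε))
  fun i => ε * Real.log (a i) - ε * Real.log (∑ j, Real.exp ((g j - C i j) / ε))

lemma key_poly (t m M : ℝ) (ht : 1 ≤ t) (hm : 0 < m) (hm1 : m ≤ 1) (hM1 : 1 ≤ M)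
    (hMm : M ≤ t^2 * m) : (t+1) * ((1-m)*(M-1)) ≤ (t-1)*(M-m) := by
  set s := Real.sqrt (M/m) with hs
  set p := Real.sqrt (m*M) with hp
  have hs0 : 0 ≤ s := Real.sqrt_nonneg _
  have hp0 : 0 ≤ p := Real.sqrt_nonneg _
  have hsp : s * p = M := by
    rw [hs, hp, ← Real.sqrt_mul (by positivity)]
    rw [show M/m*(m*M) = M^2 by field_simp]
    exact Real.sqrt_sq (by linarith)
  have hms : m * s = p := by
    rw [hs, hp]
    rw [show m * √(M/m) = √(m^2) * √(M/m) by rw [Real.sqrt_sq hm.le]]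
    rw [← Real.sqrt_mul (by positivity), show m^2*(M/m) = m*M by field_simp]
  have hts : s ≤ t := by
    have : s^2 ≤ t^2 := by
      rw [hs, Real.sq_sqrt (by positivity)]
      rw [div_le_iff₀ hm]; linarith
    nlinarith
  have hA : 0 ≤ 1 - 2*m + m*M := by nlinarith
  nlinarith [mul_nonneg (sub_nonneg.2 hts) hA, sq_nonneg (1-p), mul_nonneg hs0 (sq_nonneg (1-p))]

lemma tv_bound {κ : Type*} [Fintype κ] [Nonempty κ] (β ρ : κ → ℝ) (t : ℝ) (ht : 1 ≤ t)
    (hβ : ∀ j, 0 < β j) (hρ : ∀ j, 0 < ρ j)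
    (hβ1 : ∑ j, β j = 1) (hρ1 : ∑ j, ρ j * β j = 1)
    (hcross : ∀ j k, ρ j ≤ t^2 * ρ k) :
    ∑ j, β j * |ρ j - 1| ≤ 2 * ((t-1)/(t+1)) := by
  have hne : (Finset.univ : Finset κ).Nonempty := univ_nonempty
  obtain ⟨jm, -, hjm⟩ := Finset.exists_mem_eq_inf' hne ρ
  obtain ⟨jM, -, hjM⟩ := Finset.exists_mem_eq_sup' hne ρ
  set m := ρ jm with hm
  set M := ρ jM with hM
  have hmle : ∀ j, m ≤ ρ j := fun j => hjm ▸ inf'_le _ (mem_univ j)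
  have hleM : ∀ j, ρ j ≤ M := fun j => hjM ▸ le_sup' _ (mem_univ j)
  have hm0 : 0 < m := hρ jm
  have hMm : M ≤ t^2 * m := hcross _ _
  have hm1 : m ≤ 1 := by
    have : ∑ j, m * β j ≤ ∑ j, ρ j * β j :=
      Finset.sum_le_sum fun j _ => mul_le_mul_of_nonneg_right (hmle j) (hβ j).le
    rw [← Finset.mul_sum, hβ1, mul_one, hρ1] at this; exact this
  have hM1 : 1 ≤ M := by
    have : ∑ j, ρ j * β j ≤ ∑ j, M * β j :=
      Finset.sum_le_sum fun j _ => mul_le_mul_of_nonneg_right (hleM j) (hβ j).le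
    rw [← Finset.mul_sum, hβ1, mul_one, hρ1] at this; exact this
  -- pointwise chord bound
  have chord : ∀ j, (M - m) * (β j * |ρ j - 1|) ≤
      β j * ((M-m)*(1-m) + (ρ j - m)*(M+m-2)) := by
    intro j
    have h1 := hmle j; have h2 := hleM j
    rcases le_total (ρ j) 1 with h | h
    · rw [abs_of_nonpos (by linarith : ρ j - 1 ≤ 0)]
      have key : (M-m)*(1-ρ j) ≤ (M-m)*(1-m) + (ρ j - m)*(M+m-2) := by nlinarith
      calc (M-m) * (β j * -(ρ j - 1)) = β j * ((M-m)*(1-ρ j)) := by ring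
        _ ≤ _ := mul_le_mul_of_nonneg_left key (hβ j).le
    · rw [abs_of_nonneg (by linarith : (0:ℝ) ≤ ρ j - 1)]
      have key : (M-m)*(ρ j - 1) ≤ (M-m)*(1-m) + (ρ j - m)*(M+m-2) := by nlinarith
      calc (M-m) * (β j * (ρ j - 1)) = β j * ((M-m)*(ρ j - 1)) := by ring
        _ ≤ _ := mul_le_mul_of_nonneg_left key (hβ j).le
  have hsum : (M - m) * (∑ j, β j * |ρ j - 1|) ≤ 2*(1-m)*(M-1) := by
    rw [Finset.mul_sum]
    calc ∑ j, (M-m) * (β j * |ρ j - 1|)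
        ≤ ∑ j, β j * ((M-m)*(1-m) + (ρ j - m)*(M+m-2)) := Finset.sum_le_sum fun j _ => chord j
      _ = ∑ j, ((M-m)*(1-m) * β j + (M+m-2) * (ρ j * β j) - (M+m-2) * m * β j) := by
          apply Finset.sum_congr rfl; intro j _; ring
      _ = (M-m)*(1-m) * (∑ j, β j) + (M+m-2) * (∑ j, ρ j * β j) - (M+m-2) * m * (∑ j, β j) := by
          rw [Finset.sum_sub_distrib, Finset.sum_add_distrib, ← Finset.mul_sum, ← Finset.mul_sum,
            ← Finset.mul_sum]
      _ = 2*(1-m)*(M-1) := by rw [hβ1, hρ1]; ring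
  have hkey := key_poly t m M ht hm0 hm1 hM1 hMm
  have htv0 : 0 ≤ ∑ j, β j * |ρ j - 1| :=
    Finset.sum_nonneg fun j _ => mul_nonneg (hβ j).le (abs_nonneg _)
  rcases eq_or_lt_of_le (le_trans hm1 hM1 : m ≤ M) with heq | hlt
  · have hm1' : m = 1 := le_antisymm hm1 (heq ▸ hM1)
    have hall : ∀ j, ρ j = 1 := fun j => le_antisymm (hm1' ▸ heq ▸ hleM j) (hm1' ▸ hmle j)
    simp only [hall, sub_self, abs_zero, mul_zero, Finset.sum_const_zero]
    have : (0:ℝ) ≤ (t-1)/(t+1) := div_nonneg (by linarith) (by linarith)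
    linarith
  · have h1 : (M-m) * ((t+1) * ∑ j, β j * |ρ j - 1|) ≤ (M-m) * (2*(t-1)) := by
      nlinarith [mul_le_mul_of_nonneg_right hsum (by linarith : (0:ℝ) ≤ t+1)]
    have h2 : (t+1) * ∑ j, β j * |ρ j - 1| ≤ 2*(t-1) :=
      le_of_mul_le_mul_left h1 (by linarith)
    rw [show 2*((t-1)/(t+1)) = 2*(t-1)/(t+1) from by ring,
      le_div_iff₀ (by linarith : (0:ℝ) < t+1)]
    linarith

lemma deriv_bound {κ : Type*} [Fintype κ] [Nonempty κ] (p q w s : κ → ℝ) (t : ℝ) (ht : 1 ≤ t)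
    (hp : ∀ j, 0 < p j) (hq : ∀ j, 0 < q j) (hw : ∀ j, 0 < w j)
    (hcross : ∀ j k, p j * q k ≤ t^2 * (p k * q j)) :
    ∑ j, (p j * w j / (∑ k, p k * w k) - q j * w j / (∑ k, q k * w k)) * s j
      ≤ (t-1)/(t+1) * (univ.sup' univ_nonempty s - univ.inf' univ_nonempty s) := by
  set P := ∑ k, p k * w k with hPdef
  set Q := ∑ k, q k * w k with hQdef
  have hP : 0 < P := Finset.sum_pos (fun k _ => mul_pos (hp k) (hw k)) univ_nonempty
  have hQ : 0 < Q := Finset.sum_pos (fun k _ => mul_pos (hq k) (hw k)) univ_nonempty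
  set β : κ → ℝ := fun j => q j * w j / Q with hβdef
  set ρ : κ → ℝ := fun j => p j * Q / (q j * P) with hρdef
  have hβ : ∀ j, 0 < β j := fun j => div_pos (mul_pos (hq j) (hw j)) hQ
  have hρ : ∀ j, 0 < ρ j := fun j => div_pos (mul_pos (hp j) hQ) (mul_pos (hq j) hP)
  have hβ1 : ∑ j, β j = 1 := by rw [hβdef, ← Finset.sum_div, ← hQdef, div_self hQ.ne']
  have hρβ : ∀ j, ρ j * β j = p j * w j / P := by
    intro j; rw [hρdef, hβdef]
    field_simp [hP.ne', hQ.ne', (hq j).ne']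
  have hρ1 : ∑ j, ρ j * β j = 1 := by
    simp only [hρβ]; rw [← Finset.sum_div, ← hPdef, div_self hP.ne']
  have hcross' : ∀ j k, ρ j ≤ t^2 * ρ k := by
    intro j k
    rw [hρdef, div_le_iff₀ (mul_pos (hq j) hP)]
    have h2 : t^2 * (p k * Q / (q k * P)) * (q j * P) = (t^2 * (p k * q j)) * (Q / q k) := by
      field_simp [hP.ne', (hq k).ne']
    rw [h2]
    calc p j * Q = (p j * q k) * (Q / q k) := by
          field_simp [(hq k).ne']
      _ ≤ (t^2 * (p k * q j)) * (Q / q k) :=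
          mul_le_mul_of_nonneg_right (hcross j k) (div_pos hQ (hq k)).le
  set Ms := univ.sup' univ_nonempty s with hMs
  set ms := univ.inf' univ_nonempty s with hms
  have hsle : ∀ j, s j ≤ Ms := fun j => le_sup' _ (mem_univ j)
  have hles : ∀ j, ms ≤ s j := fun j => inf'_le _ (mem_univ j)
  have hD0 : 0 ≤ Ms - ms := by
    obtain ⟨j⟩ := ‹Nonempty κ›; linarith [hsle j, hles j]
  set c := (Ms + ms)/2 with hc
  have hzero : ∑ j, (ρ j * β j - β j) = 0 := by
    rw [Finset.sum_sub_distrib, hρ1, hβ1, sub_self]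
  have hmain : ∑ j, (p j * w j / P - q j * w j / Q) * s j
      = ∑ j, (ρ j * β j - β j) * (s j - c) := by
    rw [Finset.sum_congr rfl (fun j _ => by rw [hρβ j, hβdef] : ∀ j ∈ univ,
      (p j * w j / P - q j * w j / Q) * s j = (ρ j * β j - β j) * s j)]
    have : ∑ j, (ρ j * β j - β j) * (s j - c) =
        ∑ j, (ρ j * β j - β j) * s j - c * ∑ j, (ρ j * β j - β j) := by
      rw [Finset.mul_sum, ← Finset.sum_sub_distrib]
      exact Finset.sum_congr rfl fun j _ => by ring
    rw [this, hzero, mul_zero, sub_zero]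
  rw [hmain]
  calc ∑ j, (ρ j * β j - β j) * (s j - c)
      ≤ ∑ j, (β j * |ρ j - 1|) * ((Ms - ms)/2) := by
        apply Finset.sum_le_sum
        intro j _
        have h1 : (ρ j * β j - β j) * (s j - c) ≤ |ρ j * β j - β j| * |s j - c| := by
          calc (ρ j * β j - β j) * (s j - c) ≤ |(ρ j * β j - β j) * (s j - c)| := le_abs_self _
            _ = |ρ j * β j - β j| * |s j - c| := abs_mul _ _
        have h2 : |ρ j * β j - β j| = β j * |ρ j - 1| := by
          rw [show ρ j * β j - β j = β j * (ρ j - 1) from by ring, abs_mul,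
            abs_of_pos (hβ j)]
        have h3 : |s j - c| ≤ (Ms - ms)/2 := by
          rw [abs_le]; constructor <;> [linarith [hles j]; linarith [hsle j]]
        calc (ρ j * β j - β j) * (s j - c) ≤ |ρ j * β j - β j| * |s j - c| := h1
          _ = β j * |ρ j - 1| * |s j - c| := by rw [h2]
          _ ≤ β j * |ρ j - 1| * ((Ms - ms)/2) :=
              mul_le_mul_of_nonneg_left h3 (mul_nonneg (hβ j).le (abs_nonneg _))
    _ = (∑ j, β j * |ρ j - 1|) * ((Ms - ms)/2) := by rw [← Finset.sum_mul]
    _ ≤ (2 * ((t-1)/(t+1))) * ((Ms - ms)/2) := by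
        apply mul_le_mul_of_nonneg_right _ (by linarith)
        exact tv_bound β ρ t ht hβ hρ hβ1 hρ1 hcross'
    _ = (t-1)/(t+1) * (Ms - ms) := by ring

lemma pair_bound {κ : Type*} [Fintype κ] [Nonempty κ] (ε t : ℝ) (hε : 0 < ε) (ht : 1 ≤ t)
    (p q : κ → ℝ) (hp : ∀ j, 0 < p j) (hq : ∀ j, 0 < q j)
    (hcross : ∀ j k, p j * q k ≤ t^2 * (p k * q j)) (x y : κ → ℝ) :
    (ε * Real.log (∑ j, p j * Real.exp (x j / ε)) - ε * Real.log (∑ j, q j * Real.exp (x j / ε)))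
      - (ε * Real.log (∑ j, p j * Real.exp (y j / ε)) - ε * Real.log (∑ j, q j * Real.exp (y j / ε)))
      ≤ (t-1)/(t+1) * (univ.sup' univ_nonempty (x - y) - univ.inf' univ_nonempty (x - y)) := by
  set s : κ → ℝ := fun j => x j - y j with hsdef
  have hsxy : (x - y) = s := rfl
  set z : ℝ → κ → ℝ := fun θ j => y j + θ * s j with hzdef
  set w : ℝ → κ → ℝ := fun θ j => Real.exp (z θ j / ε) with hwdef
  have hwpos : ∀ θ j, 0 < w θ j := fun θ j => Real.exp_pos _
  set Sp : ℝ → ℝ := fun θ => ∑ j, p j * w θ j with hSpdef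
  set Sq : ℝ → ℝ := fun θ => ∑ j, q j * w θ j with hSqdef
  have hSppos : ∀ θ, 0 < Sp θ := fun θ =>
    Finset.sum_pos (fun j _ => mul_pos (hp j) (hwpos θ j)) univ_nonempty
  have hSqpos : ∀ θ, 0 < Sq θ :=  fun θ =>
    Finset.sum_pos (fun j _ => mul_pos (hq j) (hwpos θ j)) univ_nonempty
  set h : ℝ → ℝ := fun θ => ε * Real.log (Sp θ) - ε * Real.log (Sq θ) with hhdef
  set D : ℝ → ℝ := fun θ =>
    ∑ j, (p j * w θ j / Sp θ - q j * w θ j / Sq θ) * s j with hDdef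
  -- derivative facts
  have hder : ∀ θ, HasDerivAt h (D θ) θ := by
    intro θ
    have hz : ∀ j, HasDerivAt (fun θ : ℝ => z θ j / ε) (s j / ε) θ := by
      intro j
      simpa using (((hasDerivAt_mul_const (s j)).const_add (y j)).div_const ε)
    have hterm : ∀ (c : κ → ℝ), HasDerivAt (fun θ => ∑ j, c j * w θ j)
        (∑ j, c j * (w θ j * (s j / ε))) θ := by
      intro c
      exact HasDerivAt.fun_sum fun j _ => ((hz j).exp.const_mul (c j))
    have hlp : HasDerivAt (fun θ => ε * Real.log (Sp θ))
        (ε * ((∑ j, p j * (w θ j * (s j / ε))) / Sp θ)) θ :=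
      (((hterm p).log (hSppos θ).ne')).const_mul ε
    have hlq : HasDerivAt (fun θ => ε * Real.log (Sq θ))
        (ε * ((∑ j, q j * (w θ j * (s j / ε))) / Sq θ)) θ :=
      (((hterm q).log (hSqpos θ).ne')).const_mul ε
    have heq : ε * ((∑ j, p j * (w θ j * (s j / ε))) / Sp θ)
        - ε * ((∑ j, q j * (w θ j * (s j / ε))) / Sq θ) = D θ := by
      have hrw : ∀ (c : κ → ℝ) (S : ℝ), S ≠ 0 →
          ε * ((∑ j, c j * (w θ j * (s j / ε))) / S) = ∑ j, (c j * w θ j / S) * s j := by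
        intro c S hS
        rw [show (∑ j, c j * (w θ j * (s j / ε))) = (∑ j, c j * w θ j * s j) / ε by
          rw [Finset.sum_div]; exact Finset.sum_congr rfl fun j _ => by field_simp]
        rw [show (∑ j, (c j * w θ j / S) * s j) = (∑ j, c j * w θ j * s j) / S by
          rw [Finset.sum_div]; exact Finset.sum_congr rfl fun j _ => by field_simp]
        field_simp
      simp only [hDdef]
      rw [show (∑ j, (p j * w θ j / Sp θ - q j * w θ j / Sq θ) * s j)
          = (∑ j, (p j * w θ j / Sp θ) * s j) - ∑ j, (q j * w θ j / Sq θ) * s j by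
        rw [← Finset.sum_sub_distrib]; exact Finset.sum_congr rfl fun j _ => by ring]
      rw [hrw p _ (hSppos θ).ne', hrw q _ (hSqpos θ).ne']
    exact heq ▸ (hlp.sub hlq)
  -- MVT
  obtain ⟨c, -, hc⟩ := exists_hasDerivAt_eq_slope h D (by norm_num : (0:ℝ) < 1)
    (Differentiable.continuous (fun θ => (hder θ).differentiableAt)).continuousOn
    (fun θ _ => hder θ)
  have hslope : h 1 - h 0 = D c := by
    rw [hc]; norm_num
  have hbound : D c ≤ (t-1)/(t+1) * (univ.sup' univ_nonempty s - univ.inf' univ_nonempty s) := by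
    rw [hDdef]
    exact deriv_bound p q (w c) s t ht hp hq (hwpos c) hcross
  have h1 : h 1 = ε * Real.log (∑ j, p j * Real.exp (x j / ε))
      - ε * Real.log (∑ j, q j * Real.exp (x j / ε)) := by
    rw [hhdef]
    have : ∀ j, w 1 j = Real.exp (x j / ε) := by
      intro j; simp only [hwdef, hzdef, hsdef]; ring_nf
    simp only [hSpdef, hSqdef, this]
  have h0 : h 0 = ε * Real.log (∑ j, p j * Real.exp (y j / ε))
      - ε * Real.log (∑ j, q j * Real.exp (y j / ε)) := by
    rw [hhdef]
    have : ∀ j, w 0 j = Real.exp (y j / ε) := by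
      intro j; simp only [hwdef, hzdef, hsdef]; ring_nf
    simp only [hSpdef, hSqdef, this]
  rw [hsxy, ← h1, ← h0, hslope]
  exact hbound

lemma varNorm_le_of_pairs {n : ℕ} [Nonempty (Fin n)] (u : Fin n → ℝ) (B : ℝ)
    (h : ∀ i i', u i - u i' ≤ B) : varNorm u ≤ B := by
  unfold varNorm
  obtain ⟨i0, -, h0⟩ := Finset.exists_mem_eq_sup' (univ_nonempty) u
  obtain ⟨i1, -, h1⟩ := Finset.exists_mem_eq_inf' (univ_nonempty) u
  rw [h0, h1]; exact h i0 i1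

lemma half_contract {r c : ℕ} [Nonempty (Fin r)] [Nonempty (Fin c)]
    (ε t : ℝ) (hε : 0 < ε) (ht : 1 ≤ t)
    (A : Fin r → Fin c → ℝ) (hA : ∀ i j, 0 < A i j)
    (hcross : ∀ i i' j j', A i j * A i' j' ≤ t^2 * (A i' j * A i j'))
    (x y : Fin c → ℝ) :
    varNorm (fun i => ε * Real.log (∑ j, A i j * Real.exp (x j / ε))
        - ε * Real.log (∑ j, A i j * Real.exp (y j / ε)))
      ≤ (t-1)/(t+1) * varNorm (x - y) := by
  apply varNorm_le_of_pairs
  intro i i'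
  have hcr : ∀ j k, A i j * A i' k ≤ t^2 * (A i k * A i' j) := by
    intro j k
    calc A i j * A i' k ≤ t^2 * (A i' j * A i k) := hcross i i' j k
      _ = t^2 * (A i k * A i' j) := by ring
  have := pair_bound ε t hε ht (A i) (A i') (hA i) (hA i') hcr x y
  calc (ε * Real.log (∑ j, A i j * Real.exp (x j / ε))
          - ε * Real.log (∑ j, A i j * Real.exp (y j / ε)))
        - (ε * Real.log (∑ j, A i' j * Real.exp (x j / ε))
          - ε * Real.log (∑ j, A i' j * Real.exp (y j / ε)))
      = (ε * Real.log (∑ j, A i j * Real.exp (x j / ε))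
          - ε * Real.log (∑ j, A i' j * Real.exp (x j / ε)))
        - (ε * Real.log (∑ j, A i j * Real.exp (y j / ε))
          - ε * Real.log (∑ j, A i' j * Real.exp (y j / ε))) := by ring
    _ ≤ (t-1)/(t+1) * (univ.sup' univ_nonempty (x - y) - univ.inf' univ_nonempty (x - y)) := this
    _ = (t-1)/(t+1) * varNorm (x - y) := rfl

lemma concave_max (ε A Cc : ℝ) (hε : 0 < ε) (hA : 0 < A) (hC : 0 < Cc)
    (hle : ∀ τ : ℝ, τ * A - ε * (Cc * (Real.exp (τ/ε) - 1)) ≤ 0) : Cc = A := by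
  by_contra hne
  have hne1 : Cc / A ≠ 1 := by
    intro h; exact hne (by field_simp at h; linarith)
  have h1 : Real.log (Cc/A) < Cc/A - 1 :=
    Real.log_lt_sub_one_of_pos (by positivity) hne1
  set τ0 := ε * Real.log (A/Cc) with hτ0
  have hexp : Real.exp (τ0/ε) = A/Cc := by
    rw [hτ0, mul_comm, mul_div_assoc, div_self hε.ne', mul_one]
    exact Real.exp_log (by positivity)
  have h2 := hle τ0
  rw [hexp] at h2
  have hlog : Real.log (A/Cc) = - Real.log (Cc/A) := by
    rw [← Real.log_inv]; congr 1; rw [inv_div]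
  rw [hτ0, hlog] at h2
  -- h2 : ε * (-log (Cc/A)) * A - ε * (Cc * (A/Cc - 1)) ≤ 0
  have hCA : Cc * (A/Cc - 1) = A - Cc := by field_simp
  rw [hCA] at h2
  have h3 : ε*A*Real.log (Cc/A) < ε*A*(Cc/A - 1) := by
    exact (mul_lt_mul_iff_right₀ (mul_pos hε hA)).2 h1
  have h5 : ε*A*(Cc/A - 1) = ε*Cc - ε*A := by field_simp
  rw [h5] at h3
  nlinarith [h3, h2]

lemma sum_update_mul {k : ℕ} (f c : Fin k → ℝ) (i : Fin k) (v : ℝ) :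
    ∑ i', (Function.update f i v) i' * c i'
      = (∑ i', f i' * c i') + (v - f i) * c i := by
  have hupd : (fun i' => (Function.update f i v) i' * c i')
      = Function.update (fun i' => f i' * c i') i (v * c i) := by
    funext i'
    rcases eq_or_ne i' i with h | h
    · subst h; simp
    · simp [Function.update_of_ne h]
  rw [hupd, Finset.sum_update_of_mem (Finset.mem_univ i),
    Finset.sum_eq_sum_sdiff_singleton_add (Finset.mem_univ i) (fun i' => f i' * c i')]
  ring

lemma sum_update_exp {k : ℕ} (ε : ℝ) (f c : Fin k → ℝ) (i : Fin k) (v : ℝ) :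
    ∑ i', Real.exp ((Function.update f i v) i' / ε) * c i'
      = (∑ i', Real.exp (f i' / ε) * c i') + (Real.exp (v / ε) - Real.exp (f i / ε)) * c i := by
  have hupd : (fun i' => Real.exp ((Function.update f i v) i' / ε) * c i')
      = Function.update (fun i' => Real.exp (f i' / ε) * c i') i (Real.exp (v / ε) * c i) := by
    funext i'
    rcases eq_or_ne i' i with h | h
    · subst h; simp
    · simp [Function.update_of_ne h]
  rw [hupd, Finset.sum_update_of_mem (Finset.mem_univ i),
    Finset.sum_eq_sum_sdiff_singleton_add (Finset.mem_univ i)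
      (fun i' => Real.exp (f i' / ε) * c i')]
  ring

theorem stmt0 {n m : ℕ} [Nonempty (Fin n)] [Nonempty (Fin m)]
    (ε : ℝ) (hε : 0 < ε)
    (C : Matrix (Fin n) (Fin m) ℝ)
    (a : Fin n → ℝ) (b : Fin m → ℝ)
    (ha : ∀ i, 0 < a i) (hb : ∀ j, 0 < b j)
    (hasum : ∑ i, a i = 1) (hbsum : ∑ j, b j = 1)
    (K : Matrix (Fin n) (Fin m) ℝ) (hK : ∀ i j, K i j = Real.exp (-C i j / ε))
    (η : ℝ)
    (hη : IsGreatest {r : ℝ | ∃ i j : Fin n, ∃ k l : Fin m,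
      r = K i k * K j l / (K j k * K i l)} η)
    (lam : ℝ) (hlam : lam = (Real.sqrt η - 1) / (Real.sqrt η + 1))
    (fstar : Fin n → ℝ) (gstar : Fin m → ℝ)
    (hopt : ∀ (f' : Fin n → ℝ) (g' : Fin m → ℝ),
      dualObj ε a b K f' g' ≤ dualObj ε a b K fstar gstar)
    (f : ℕ → Fin n → ℝ)
    (hiter : ∀ ℓ : ℕ, f (ℓ + 1) = sinkhornStep ε a b C (f ℓ)) :
    lam < 1 ∧
      ∀ ℓ : ℕ, varNorm (f ℓ - fstar) ≤ lam ^ (2 * ℓ) * varNorm (f 0 - fstar) := by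
  classical
  have hKpos : ∀ i j, 0 < K i j := fun i j => by rw [hK]; exact Real.exp_pos _
  obtain ⟨i0⟩ := ‹Nonempty (Fin n)›
  obtain ⟨j0⟩ := ‹Nonempty (Fin m)›
  have hη1 : 1 ≤ η := by
    apply hη.2
    refine ⟨i0, i0, j0, j0, ?_⟩
    rw [div_self (mul_pos (hKpos i0 j0) (hKpos i0 j0)).ne']
  set t := Real.sqrt η with htdef
  have ht2 : t^2 = η := Real.sq_sqrt (by linarith)
  have ht1 : 1 ≤ t := by nlinarith [Real.sqrt_nonneg η]
  have hlamt : lam = (t-1)/(t+1) := hlam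
  have hlam0 : 0 ≤ lam := by rw [hlamt]; apply div_nonneg <;> linarith
  have hlam1 : lam < 1 := by rw [hlamt, div_lt_one (by linarith)]; linarith
  refine ⟨hlam1, ?_⟩
  have hcrossK : ∀ i i' j j', K i j * K i' j' ≤ t^2 * (K i' j * K i j') := by
    intro i i' j j'
    rw [ht2]
    have hmem := hη.2 ⟨i, i', j, j', rfl⟩
    rw [div_le_iff₀ (mul_pos (hKpos i' j) (hKpos i j'))] at hmem
    linarith
  -- marginal quantities
  set S : Fin n → ℝ := fun i => ∑ j, K i j * Real.exp (gstar j / ε) with hSdef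
  set T : Fin m → ℝ := fun j => ∑ i, K i j * Real.exp (fstar i / ε) with hTdef
  have hSpos : ∀ i, 0 < S i := fun i =>
    Finset.sum_pos (fun j _ => mul_pos (hKpos i j) (Real.exp_pos _)) univ_nonempty
  have hTpos : ∀ j, 0 < T j := fun j =>
    Finset.sum_pos (fun i _ => mul_pos (hKpos i j) (Real.exp_pos _)) univ_nonempty
  have hds : ∀ (fv : Fin n → ℝ),
      (∑ i, ∑ j, Real.exp (fv i / ε) * K i j * Real.exp (gstar j / ε))
        = ∑ i, Real.exp (fv i / ε) * S i := by
    intro fv; apply Finset.sum_congr rfl; intro i _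
    rw [hSdef, Finset.mul_sum]
    exact Finset.sum_congr rfl fun j _ => by ring
  have hds2 : ∀ (gv : Fin m → ℝ),
      (∑ i, ∑ j, Real.exp (fstar i / ε) * K i j * Real.exp (gv j / ε))
        = ∑ j, Real.exp (gv j / ε) * T j := by
    intro gv
    rw [Finset.sum_comm]
    apply Finset.sum_congr rfl; intro j _
    rw [hTdef, Finset.mul_sum]
    exact Finset.sum_congr rfl fun i _ => by ring
  -- first-order optimality: marginals
  have hMf : ∀ i, Real.exp (fstar i / ε) * S i = a i := by
    intro i
    apply concave_max ε (a i) _ hε (ha i) (mul_pos (Real.exp_pos _) (hSpos i))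
    intro τ
    have h2 := hopt (Function.update fstar i (fstar i + τ)) gstar
    unfold dualObj at h2
    rw [hds, hds fstar, sum_update_mul fstar a i (fstar i + τ),
      sum_update_exp ε fstar S i (fstar i + τ)] at h2
    have hE : Real.exp ((fstar i + τ) / ε) = Real.exp (fstar i / ε) * Real.exp (τ / ε) := by
      rw [add_div, Real.exp_add]
    rw [hE] at h2
    nlinarith [h2]
  have hMg : ∀ j, Real.exp (gstar j / ε) * T j = b j := by
    intro j
    apply concave_max ε (b j) _ hε (hb j) (mul_pos (Real.exp_pos _) (hTpos j))
    intro τ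
    have h2 := hopt fstar (Function.update gstar j (gstar j + τ))
    unfold dualObj at h2
    rw [hds2, hds2 gstar, sum_update_mul gstar b j (gstar j + τ),
      sum_update_exp ε gstar T j (gstar j + τ)] at h2
    have hE : Real.exp ((gstar j + τ) / ε) = Real.exp (gstar j / ε) * Real.exp (τ / ε) := by
      rw [add_div, Real.exp_add]
    rw [hE] at h2
    nlinarith [h2]
  -- rewrite sinkhornStep via K
  have hrw1 : ∀ (x : ℝ) (i : Fin n) (j : Fin m),
      Real.exp ((x - C i j) / ε) = K i j * Real.exp (x / ε) := by
    intro x i j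
    rw [hK, ← Real.exp_add, ← add_div]
    congr 1
    ring
  set G : (Fin n → ℝ) → Fin m → ℝ :=
    fun φ j => ε * Real.log (b j) - ε * Real.log (∑ i, K i j * Real.exp (φ i / ε)) with hGdef
  have hglet : ∀ (φ : Fin n → ℝ) (j : Fin m),
      (ε * Real.log (b j) - ε * Real.log (∑ i', Real.exp ((φ i' - C i' j) / ε))) = G φ j := by
    intro φ j
    simp only [hGdef, hrw1]
  have hstep_eq : ∀ φ, sinkhornStep ε a b C φ
      = fun i => ε * Real.log (a i) - ε * Real.log (∑ j, K i j * Real.exp (G φ j / ε)) := by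
    intro φ
    funext i
    show ε * Real.log (a i) - ε * Real.log (∑ j, Real.exp
        (((ε * Real.log (b j) - ε * Real.log (∑ i', Real.exp ((φ i' - C i' j) / ε))) - C i j) / ε))
      = _
    simp only [hglet, hrw1, hGdef]
  have hGfix : G fstar = gstar := by
    funext j
    simp only [hGdef]
    have hTj : (∑ i, K i j * Real.exp (fstar i / ε)) = b j / Real.exp (gstar j / ε) := by
      rw [eq_div_iff (Real.exp_ne_zero _)]
      rw [← hMg j, hTdef]
      ring
    rw [hTj, Real.log_div (hb j).ne' (Real.exp_ne_zero _), Real.log_exp]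
    field_simp
    ring
  have hSa : ∀ i, (∑ j, K i j * Real.exp (gstar j / ε)) = a i / Real.exp (fstar i / ε) := by
    intro i
    rw [eq_div_iff (Real.exp_ne_zero _), ← hMf i, hSdef]
    ring
  have hfix : sinkhornStep ε a b C fstar = fstar := by
    rw [hstep_eq fstar, hGfix]
    funext i
    rw [hSa i, Real.log_div (ha i).ne' (Real.exp_ne_zero _), Real.log_exp]
    field_simp
    ring
  -- one-step contraction
  have hfstar_eq : fstar = fun i =>
      ε * Real.log (a i) - ε * Real.log (∑ j, K i j * Real.exp (gstar j / ε)) := by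
    conv_lhs => rw [← hfix, hstep_eq fstar, hGfix]
  have hstep_bound : ∀ φ : Fin n → ℝ,
      varNorm (sinkhornStep ε a b C φ - fstar) ≤ lam^2 * varNorm (φ - fstar) := by
    intro φ
    have e1 : sinkhornStep ε a b C φ - fstar
        = fun i => ε * Real.log (∑ j, K i j * Real.exp (gstar j / ε))
            - ε * Real.log (∑ j, K i j * Real.exp (G φ j / ε)) := by
      funext i
      rw [Pi.sub_apply, hstep_eq φ, congrFun hfstar_eq i]
      ring
    have e2 : gstar - G φ
        = fun j => ε * Real.log (∑ i, K i j * Real.exp (φ i / ε))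
            - ε * Real.log (∑ i, K i j * Real.exp (fstar i / ε)) := by
      funext j
      rw [Pi.sub_apply, ← hGfix, hGdef]
      ring
    have hb1 : varNorm (sinkhornStep ε a b C φ - fstar) ≤ lam * varNorm (gstar - G φ) := by
      rw [e1, hlamt]
      exact half_contract ε t hε ht1 (fun i j => K i j) hKpos
        (fun i i' j j' => hcrossK i i' j j') gstar (G φ)
    have hb2 : varNorm (gstar - G φ) ≤ lam * varNorm (φ - fstar) := by
      rw [e2, hlamt]
      refine half_contract ε t hε ht1 (fun j i => K i j) (fun j i => hKpos i j)
        ?_ φ fstar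
      intro j j' i i'
      calc K i j * K i' j' ≤ t^2 * (K i' j * K i j') := hcrossK i i' j j'
        _ = t^2 * (K i j' * K i' j) := by ring
    calc varNorm (sinkhornStep ε a b C φ - fstar) ≤ lam * varNorm (gstar - G φ) := hb1
      _ ≤ lam * (lam * varNorm (φ - fstar)) :=
          mul_le_mul_of_nonneg_left hb2 hlam0
      _ = lam^2 * varNorm (φ - fstar) := by ring
  -- induction
  intro ℓ
  induction ℓ with
  | zero => norm_num
  | succ ℓ ih =>
    have h1 : varNorm (f (ℓ+1) - fstar) ≤ lam^2 * varNorm (f ℓ - fstar) := by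
      rw [hiter ℓ]; exact hstep_bound (f ℓ)
    calc varNorm (f (ℓ+1) - fstar) ≤ lam^2 * varNorm (f ℓ - fstar) := h1
      _ ≤ lam^2 * (lam ^ (2*ℓ) * varNorm (f 0 - fstar)) :=
          mul_le_mul_of_nonneg_left ih (by positivity)
      _ = lam ^ (2*(ℓ+1)) * varNorm (f 0 - fstar) := by
          rw [show 2*(ℓ+1) = 2 + 2*ℓ from by ring, pow_add]
          ring
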